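/- Let k ≥ 1 and let π be a permutation of [k] with π(1) = 1. Let n, d ≥ 1, let S ⊆ [n]^d with (1,…,1) ∉ S, and let f : [n]^d → ℝ be such that the restriction of f to [n]^d ∖ S is π-free. Define f* : [n]^d → ℝ by f*(x) = f(x) for x ∉ S, and f*(x) = min{ f(p) : p ∉ S, p ≼ x } for x ∈ S (the minimum is over a nonempty set since (1,…,1) ∉ S and (1,…,1) ≼ x). Then f* is π-free. -/
import Mathlib


/-- The coordinatewise (grid) partial order on `[n]^d`, modeled as `Fin d → Fin n`. -/
def gridLE {n d : ℕ} (x y : Fin d → Fin n) : Prop := ∀ i, x i ≤ y i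

/-- Strict grid order: `x ≺ y` iff `x ≼ y` and `x ≠ y`. -/
def gridLT {n d : ℕ} (x y : Fin d → Fin n) : Prop := gridLE x y ∧ x ≠ y

/-- `x : Fin k → [n]^d` is a `π`-appearance of `f`: a chain `x 0 ≺ x 1 ≺ ⋯ ≺ x (k-1)`
whose `f`-values are ordered exactly as `π` orders `[k]`. -/
def IsPiAppearance {n d k : ℕ} (f : (Fin d → Fin n) → ℝ) (π : Equiv.Perm (Fin k))
    (x : Fin k → Fin d → Fin n) : Prop :=
  (∀ i j : Fin k, i < j → gridLT (x i) (x j)) ∧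
  (∀ i j : Fin k, f (x i) < f (x j) ↔ π i < π j)

/-- `f` restricted to `A` has no `π`-appearance. -/
def PiFreeOn {n d k : ℕ} (f : (Fin d → Fin n) → ℝ) (π : Equiv.Perm (Fin k))
    (A : Set (Fin d → Fin n)) : Prop :=
  ¬ ∃ x : Fin k → Fin d → Fin n, IsPiAppearance f π x ∧ ∀ i, x i ∈ A

/-- `f` is `π`-free. -/
def PiFree {n d k : ℕ} (f : (Fin d → Fin n) → ℝ) (π : Equiv.Perm (Fin k)) : Prop :=
  PiFreeOn f π Set.univ

/-- The deletion distance of `f` from `π`-freeness: the minimum cardinality of a set `S`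
of indices such that `f` restricted to the complement of `S` is `π`-free. -/
noncomputable def patternDeletionDist {n d k : ℕ} (f : (Fin d → Fin n) → ℝ)
    (π : Equiv.Perm (Fin k)) : ℕ :=
  sInf {s : ℕ | ∃ S : Set (Fin d → Fin n), S.ncard = s ∧ PiFreeOn f π Sᶜ}

/-- The Hamming distance of `f` from `π`-freeness: the minimum number of points where `f`
must be changed to obtain a `π`-free function. -/
noncomputable def patternHammingDist {n d k : ℕ} (f : (Fin d → Fin n) → ℝ)
    (π : Equiv.Perm (Fin k)) : ℕ :=
  sInf {s : ℕ | ∃ g : (Fin d → Fin n) → ℝ, PiFree g π ∧ {x | f x ≠ g x}.ncard = s}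

/-- Let `π` be a permutation of `[k]` with `π(1) = 1`, let `S ⊆ [n]^d`
not contain `(1,…,1)`, and suppose `f` restricted to the complement of `S` is `π`-free.
Define `f*` to agree with `f` off `S` and, on `S`, to take the value
`min { f(p) : p ∉ S, p ≼ x }` (formalized via `IsLeast`). Then `f*` is `π`-free. -/
theorem stmt3 (k n d : ℕ) (hk : 1 ≤ k) (hn : 1 ≤ n) (hd : 1 ≤ d)
    (π : Equiv.Perm (Fin k)) (hπ : π ⟨0, hk⟩ = ⟨0, hk⟩)
    (S : Set (Fin d → Fin n))
    (hS : (fun _ => (⟨0, hn⟩ : Fin n)) ∉ S)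
    (f : (Fin d → Fin n) → ℝ)
    (hf : PiFreeOn f π Sᶜ)
    (fstar : (Fin d → Fin n) → ℝ)
    (hfs1 : ∀ x ∉ S, fstar x = f x)
    (hfs2 : ∀ x ∈ S, IsLeast {y : ℝ | ∃ p ∉ S, gridLE p x ∧ f p = y} (fstar x)) :
    PiFree fstar π := by
  rintro ⟨x, ⟨h1, h2⟩, -⟩
  set z0 : Fin k := ⟨0, hk⟩ with hz0
  obtain ⟨p, hpS, hple, hpf⟩ :
      ∃ p, p ∉ S ∧ gridLE p (x z0) ∧ f p = fstar (x z0) := by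
    by_cases h : x z0 ∈ S
    · obtain ⟨p, hp1, hp2, hp3⟩ := (hfs2 _ h).1
      exact ⟨p, hp1, hp2, hp3⟩
    · exact ⟨x z0, h, fun i => le_refl _, (hfs1 _ h).symm⟩
  have hlt : ∀ i : Fin k, i ≠ z0 → z0 < i := by
    intro i hi
    exact lt_of_le_of_ne (Fin.le_def.mpr (Nat.zero_le _)) (Ne.symm hi)
  have hmin : ∀ i : Fin k, i ≠ z0 → fstar (x z0) < fstar (x i) := by
    intro i hi
    rw [h2, hπ]
    have hne : π i ≠ z0 := fun h => hi (π.injective (h.trans hπ.symm))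
    exact Fin.lt_def.mpr (Nat.pos_of_ne_zero (fun h0 => hne (Fin.ext h0)))
  have hxS : ∀ i : Fin k, i ≠ z0 → x i ∉ S := by
    intro i hi hiS
    have hgle : gridLE p (x i) := fun t => le_trans (hple t) ((h1 z0 i (hlt i hi)).1 t)
    have hle : fstar (x i) ≤ f p := (hfs2 _ hiS).2 ⟨p, hpS, hgle, rfl⟩
    rw [hpf] at hle
    exact absurd (hmin i hi) (not_lt.mpr hle)
  set y : Fin k → Fin d → Fin n := fun i => if i = z0 then p else x i with hy
  have hyval : ∀ i, f (y i) = fstar (x i) := by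
    intro i
    by_cases h : i = z0
    · simp only [hy, h, if_pos rfl]
      rw [hpf]
    · simp only [hy, if_neg h]
      exact (hfs1 _ (hxS i h)).symm
  apply hf
  refine ⟨y, ⟨?_, ?_⟩, ?_⟩
  · intro i j hij
    have hjz : j ≠ z0 := by
      intro h
      subst h
      exact Nat.not_lt_zero _ (Fin.lt_def.mp hij)
    have hyj : y j = x j := by simp only [hy, if_neg hjz]
    by_cases h : i = z0
    · have hyi : y i = p := by simp only [hy, h, if_pos rfl]
      rw [hyi, hyj]
      refine ⟨fun t => le_trans (hple t) ((h1 z0 j (h ▸ hij)).1 t), ?_⟩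
      intro he
      have := hmin j hjz
      rw [← hpf, he, hfs1 _ (hxS j hjz)] at this
      exact lt_irrefl _ this
    · have hyi : y i = x i := by simp only [hy, if_neg h]
      rw [hyi, hyj]
      exact h1 i j hij
  · intro i j
    rw [hyval i, hyval j]
    exact h2 i j
  · intro i
    by_cases h : i = z0
    · simp only [hy, h, if_pos rfl]
      exact hpS
    · simp only [hy, if_neg h]
      exact hxS i h
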